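/- Asymptotics of the incomplete Gaussian moment: for the function χ with χ(0)=0 and χ'(v) = (e^{β v²/2}/(v^{d-1} D)) ∫₀^v e^{-β w²/2} w^{d-1} dw (constant D > 0), one has χ(v) ~ (1/4) Γ(d/2) (2/β)^{d/2+1} e^{β v²/2} / (D v^d) as v → ∞. -/

import Mathlib

open Real Set Filter intervalIntegral

lemma lhopital_one_atTop (f g f' g' : ℝ → ℝ)
    (hf : ∀ᶠ v in atTop, HasDerivAt f (f' v) v)
    (hg : ∀ᶠ v in atTop, HasDerivAt g (g' v) v)
    (hg'pos : ∀ᶠ v in atTop, 0 < g' v)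
    (hgtop : Tendsto g atTop atTop)
    (hratio : Tendsto (fun v => f' v / g' v) atTop (nhds 1)) :
    Tendsto (fun v => f v / g v) atTop (nhds 1) := by
  rw [Metric.tendsto_nhds]
  intro ε hε
  set δ : ℝ := ε / 2 with hδdef
  have hδ : 0 < δ := by positivity
  have hrat' : ∀ᶠ v in atTop, |f' v / g' v - 1| < δ := by
    have := Metric.tendsto_nhds.mp hratio δ hδ
    simpa [Real.dist_eq] using this
  obtain ⟨a, ha⟩ := eventually_atTop.mp (((hf.and hg).and (hg'pos.and hrat')).and
    (hgtop.eventually_gt_atTop 0))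
  -- derivative bounds for v ≥ a
  have key : ∀ v ≥ a, (1 - δ) * g' v ≤ f' v ∧ f' v ≤ (1 + δ) * g' v := by
    intro v hv
    obtain ⟨⟨_, hgp, hr⟩, _⟩ := ha v hv
    rw [abs_sub_lt_iff] at hr
    have hfv : f' v = f' v / g' v * g' v := by field_simp
    constructor
    · have h2 : 1 - δ < f' v / g' v := by linarith [hr.2]
      rw [hfv]; nlinarith
    · have h2 : f' v / g' v < 1 + δ := by linarith [hr.1]
      rw [hfv]; nlinarith
  have mono_aux : ∀ (h h' : ℝ → ℝ), (∀ v ≥ a, HasDerivAt h (h' v) v) →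
      (∀ v ≥ a, 0 ≤ h' v) → MonotoneOn h (Ici a) := by
    intro h h' hd hnn
    apply monotoneOn_of_deriv_nonneg (convex_Ici a)
    · intro x hx
      exact ((hd x hx).continuousAt).continuousWithinAt
    · rw [interior_Ici]
      intro x hx
      exact (hd x (le_of_lt hx)).differentiableAt.differentiableWithinAt
    · rw [interior_Ici]
      intro x hx
      rw [(hd x (le_of_lt hx)).deriv]
      exact hnn x (le_of_lt hx)
  have mono1 : MonotoneOn (fun v => (1 + δ) * g v - f v) (Ici a) := by
    apply mono_aux _ (fun v => (1 + δ) * g' v - f' v)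
    · intro v hv
      exact (((ha v hv).1.1.2).const_mul (1+δ)).sub ((ha v hv).1.1.1)
    · intro v hv; linarith [(key v hv).2]
  have mono2 : MonotoneOn (fun v => f v - (1 - δ) * g v) (Ici a) := by
    apply mono_aux _ (fun v => f' v - (1 - δ) * g' v)
    · intro v hv
      exact ((ha v hv).1.1.1).sub (((ha v hv).1.1.2).const_mul (1-δ))
    · intro v hv; linarith [(key v hv).1]
  set A := f a - (1 + δ) * g a with hA
  set B := f a - (1 - δ) * g a with hB
  have hAt : Tendsto (fun v => A / g v) atTop (nhds 0) := tendsto_const_nhds.div_atTop hgtop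
  have hBt : Tendsto (fun v => B / g v) atTop (nhds 0) := tendsto_const_nhds.div_atTop hgtop
  have hAe : ∀ᶠ v in atTop, |A / g v| < δ := by
    filter_upwards [Metric.tendsto_nhds.mp hAt δ hδ] with v hv
    rwa [Real.dist_eq, sub_zero] at hv
  have hBe : ∀ᶠ v in atTop, |B / g v| < δ := by
    filter_upwards [Metric.tendsto_nhds.mp hBt δ hδ] with v hv
    rwa [Real.dist_eq, sub_zero] at hv
  filter_upwards [eventually_ge_atTop a, hAe, hBe] with v hv hAv hBv
  have hgv : 0 < g v := (ha v hv).2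
  have hm1 := mono1 self_mem_Ici hv hv
  have hm2 := mono2 self_mem_Ici hv hv
  simp only at hm1 hm2
  have h1 : f v ≤ (1 + δ) * g v + A := by rw [hA]; linarith
  have h2 : (1 - δ) * g v + B ≤ f v := by rw [hB]; linarith
  have e1 : f v / g v ≤ (1 + δ) + A / g v := by
    have h3 := (div_le_div_iff_of_pos_right hgv).mpr h1
    rwa [add_div, mul_div_assoc, div_self hgv.ne', mul_one] at h3
  have e2 : (1 - δ) + B / g v ≤ f v / g v := by
    have h3 := (div_le_div_iff_of_pos_right hgv).mpr h2
    rwa [add_div, mul_div_assoc, div_self hgv.ne', mul_one] at h3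
  have hA2 := abs_lt.mp hAv
  have hB2 := abs_lt.mp hBv
  rw [Real.dist_eq, abs_sub_lt_iff]
  constructor
  · linarith
  · linarith

/-- Asymptotics of the incomplete Gaussian moment: for `χ` with `χ(0) = 0` and
`χ'(v) = (e^{βv²/2}/(v^{d−1} D)) ∫₀^v e^{−βw²/2} w^{d−1} dw` (constant `D > 0`),
one has `χ(v) ~ (1/4) Γ(d/2) (2/β)^{d/2+1} e^{βv²/2}/(D v^d)` as `v → ∞`. -/
theorem chi_asymptotics_general_d (d : ℕ) (hd : 1 ≤ d) (β D : ℝ) (hβ : 0 < β) (hD : 0 < D)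
    (χ : ℝ → ℝ)
    (hχ0 : χ 0 = 0) (hχcont : ContinuousOn χ (Ici 0))
    (hχ' : ∀ v > (0 : ℝ), HasDerivAt χ
      (Real.exp (β * v ^ 2 / 2) / (v ^ (d - 1) * D) *
        ∫ w in (0 : ℝ)..v, Real.exp (-β * w ^ 2 / 2) * w ^ (d - 1)) v) :
    Tendsto (fun v => χ v /
        ((1 / 4) * Real.Gamma ((d : ℝ) / 2) * (2 / β) ^ ((d : ℝ) / 2 + 1) *
          Real.exp (β * v ^ 2 / 2) / (D * v ^ d)))
      atTop (nhds 1) := by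
  obtain ⟨k, rfl⟩ : ∃ k, d = k + 1 := ⟨d - 1, (Nat.succ_pred_eq_of_pos hd).symm⟩
  simp only [Nat.add_sub_cancel] at hχ'
  set c : ℝ := ((k : ℝ) + 1) / 2 with hc
  have hcast : ((k + 1 : ℕ) : ℝ) / 2 = c := by push_cast [hc]; ring
  set C : ℝ := (1 / 4) * Real.Gamma (((k + 1 : ℕ) : ℝ) / 2) *
      (2 / β) ^ (((k + 1 : ℕ) : ℝ) / 2 + 1) with hC
  set Ilim : ℝ := (β / 2) ^ (-c) * (1 / 2) * Real.Gamma c with hIlim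
  have hΓpos : 0 < Real.Gamma c := Real.Gamma_pos_of_pos (by positivity)
  have hIlimpos : 0 < Ilim := by
    refine mul_pos (mul_pos (rpow_pos_of_pos (by positivity) _) (by norm_num)) hΓpos
  have hCβ : C * β = Ilim := by
    rw [hC, hIlim, hcast]
    rw [rpow_add (by positivity), rpow_one]
    have h2 : (2 / β) ^ c = (β / 2) ^ (-c) := by
      rw [rpow_neg (by positivity), ← inv_rpow (by positivity), inv_div]
    rw [h2]
    field_simp
    ring
  have hCpos : 0 < C := by
    rw [hC]
    have := Real.Gamma_pos_of_pos (show 0 < ((k + 1 : ℕ) : ℝ) / 2 by positivity)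
    have := rpow_pos_of_pos (show (0:ℝ) < 2 / β by positivity) (((k + 1 : ℕ) : ℝ) / 2 + 1)
    positivity
  have hkcast : -1 < (k : ℝ) := by
    have := Nat.cast_nonneg (α := ℝ) k
    linarith
  have hβ2 : (0:ℝ) < β / 2 := by positivity
  -- integrability on Ioi 0
  have hIint : MeasureTheory.IntegrableOn (fun w : ℝ => Real.exp (-β * w ^ 2 / 2) * w ^ k)
      (Ioi 0) := by
    refine (integrableOn_rpow_mul_exp_neg_mul_sq hβ2 hkcast).congr_fun ?_ measurableSet_Ioi
    intro x hx
    show x ^ (k:ℝ) * Real.exp (-(β/2) * x ^ 2) = Real.exp (-β * x ^ 2 / 2) * x ^ k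
    rw [rpow_natCast, mul_comm]
    congr 2
    ring
  -- value of the improper integral
  have hval : ∫ w in Ioi (0:ℝ), Real.exp (-β * w ^ 2 / 2) * w ^ k = Ilim := by
    have h0 := integral_rpow_mul_exp_neg_mul_rpow (p := 2) (q := (k:ℝ)) (b := β/2)
      two_pos hkcast hβ2
    have heq : ∫ w in Ioi (0:ℝ), Real.exp (-β * w ^ 2 / 2) * w ^ k
        = ∫ x in Ioi (0:ℝ), x ^ (k:ℝ) * Real.exp (-(β/2) * x ^ (2:ℝ)) := by
      refine MeasureTheory.setIntegral_congr_fun measurableSet_Ioi (fun x hx => ?_)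
      rw [show (2:ℝ) = ((2:ℕ):ℝ) by norm_num, rpow_natCast, rpow_natCast, mul_comm]
      congr 1
      ring_nf
    rw [heq, h0, hIlim, hc]
    congr 2
    ring
  -- tendsto of the interval integral
  have hIten : Tendsto (fun v => ∫ w in (0:ℝ)..v, Real.exp (-β * w ^ 2 / 2) * w ^ k)
      atTop (nhds Ilim) := by
    have := MeasureTheory.intervalIntegral_tendsto_integral_Ioi 0 hIint tendsto_id
    rwa [hval] at this
  -- derivative of the comparison function g
  set g : ℝ → ℝ := fun v => C * Real.exp (β * v ^ 2 / 2) / (D * v ^ (k + 1)) with hg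
  set g' : ℝ → ℝ := fun v => Real.exp (β * v ^ 2 / 2) / (v ^ k * D) *
      (C * (β - ((k:ℝ) + 1) / v ^ 2)) with hg'def
  have hgderiv : ∀ v > (0:ℝ), HasDerivAt g (g' v) v := by
    intro v hv
    have hE : HasDerivAt (fun v : ℝ => Real.exp (β * v ^ 2 / 2))
        (Real.exp (β * v ^ 2 / 2) * (β * ((2:ℕ) * v ^ (2 - 1)) / 2)) v :=
      (((hasDerivAt_pow 2 v).const_mul β).div_const 2).exp
    have hinv : HasDerivAt (fun v : ℝ => (v ^ (k + 1))⁻¹)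
        (-(((k:ℝ) + 1) * v ^ k) / (v ^ (k + 1)) ^ 2) v := by
      have := (hasDerivAt_pow (k + 1) v).inv (pow_ne_zero _ (ne_of_gt hv))
      exact this.congr_deriv (by simp)
    have h := (hE.mul hinv).const_mul (C / D)
    simp only [Pi.mul_apply] at h
    have heq : (fun v : ℝ => C / D * (Real.exp (β * v ^ 2 / 2) * (v ^ (k + 1))⁻¹)) = g := by
      funext x
      rw [hg]
      ring
    rw [heq] at h
    refine h.congr_deriv ?_
    rw [hg'def]
    have hv2 : v ≠ 0 := ne_of_gt hv
    field_simp
    ring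
  -- growth of g
  have hgtop : Tendsto g atTop atTop := by
    have hx : Tendsto (fun v : ℝ => β * v ^ 2 / 2) atTop atTop :=
      ((tendsto_pow_atTop two_ne_zero).const_mul_atTop hβ).atTop_div_const two_pos
    have h1 : Tendsto (fun v : ℝ =>
        Real.exp (β * v ^ 2 / 2) / (β * v ^ 2 / 2) ^ (k + 1)) atTop atTop :=
      (tendsto_exp_div_pow_atTop (k + 1)).comp hx
    have h2 : Tendsto (fun v : ℝ => (β / 2) ^ (k + 1) * v ^ (k + 1)) atTop atTop :=
      (tendsto_pow_atTop (Nat.succ_ne_zero k)).const_mul_atTop (by positivity)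
    have h3 := h1.atTop_mul_atTop₀ h2
    have h4 : Tendsto (fun v : ℝ => Real.exp (β * v ^ 2 / 2) / v ^ (k + 1)) atTop atTop := by
      refine h3.congr' ?_
      filter_upwards [eventually_gt_atTop (0:ℝ)] with v hv
      have hv2 : v ≠ 0 := ne_of_gt hv
      field_simp
      ring
    have h5 := h4.const_mul_atTop (show (0:ℝ) < C / D by positivity)
    refine h5.congr fun v => ?_
    rw [hg]
    ring
  -- the quotient of denominators tends to C * β = Ilim
  have hqzero : Tendsto (fun v : ℝ => ((k:ℝ) + 1) / v ^ 2) atTop (nhds 0) :=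
    tendsto_const_nhds.div_atTop (tendsto_pow_atTop two_ne_zero)
  have hden : Tendsto (fun v : ℝ => C * (β - ((k:ℝ) + 1) / v ^ 2)) atTop (nhds Ilim) := by
    have h0 : Tendsto (fun v : ℝ => C * (β - ((k:ℝ) + 1) / v ^ 2)) atTop (nhds (C * (β - 0))) :=
      Tendsto.const_mul C (Tendsto.const_sub β hqzero)
    simpa [hCβ] using h0
  -- eventual positivity of g'
  have hg'pos : ∀ᶠ v in atTop, 0 < g' v := by
    filter_upwards [eventually_gt_atTop (0:ℝ), hqzero.eventually (eventually_lt_nhds hβ)]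
      with v hv hq
    rw [hg'def]
    have h1 : 0 < Real.exp (β * v ^ 2 / 2) / (v ^ k * D) := by positivity
    have h2 : 0 < β - ((k:ℝ) + 1) / v ^ 2 := by linarith
    exact mul_pos h1 (mul_pos hCpos h2)
  -- ratio of derivatives tends to 1
  set f' : ℝ → ℝ := fun v => Real.exp (β * v ^ 2 / 2) / (v ^ k * D) *
      ∫ w in (0:ℝ)..v, Real.exp (-β * w ^ 2 / 2) * w ^ k with hf'def
  have hratio : Tendsto (fun v => f' v / g' v) atTop (nhds 1) := by
    have h1 : Tendsto (fun v => (∫ w in (0:ℝ)..v, Real.exp (-β * w ^ 2 / 2) * w ^ k) /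
        (C * (β - ((k:ℝ) + 1) / v ^ 2))) atTop (nhds (Ilim / Ilim)) :=
      hIten.div hden (ne_of_gt hIlimpos)
    rw [div_self (ne_of_gt hIlimpos)] at h1
    refine h1.congr' ?_
    filter_upwards [eventually_gt_atTop (0:ℝ)] with v hv
    have hP : Real.exp (β * v ^ 2 / 2) / (v ^ k * D) ≠ 0 := by positivity
    rw [hf'def, hg'def, mul_div_mul_left _ _ hP]
  have hf : ∀ᶠ v in atTop, HasDerivAt χ (f' v) v := by
    filter_upwards [eventually_gt_atTop (0:ℝ)] with v hv
    exact hχ' v hv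
  have hgd : ∀ᶠ v in atTop, HasDerivAt g (g' v) v := by
    filter_upwards [eventually_gt_atTop (0:ℝ)] with v hv
    exact hgderiv v hv
  exact lhopital_one_atTop χ g f' g' hf hgd hg'pos hgtop hratio
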